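/- Let G be a finite group with a subgroup H of index 2, and F^α G a twisted group algebra over an algebraically closed field of characteristic zero such that for every e ≠ h ∈ H there is g ∈ C_G(h) with U_h U_g ≠ U_g U_h. Then F^α G, with the Z/2Z-grading whose even part is spanned by {U_h : h ∈ H} and odd part by {U_g : g ∉ H}, is Z/2Z-graded-simple (has no nonzero proper graded two-sided ideals). -/

import Mathlib

/-- `A` is a twisted group algebra `F^α G`: the units `U g` form an `F`-basis and multiply
according to the 2-cocycle `α`, i.e. `U_g U_h = α(g,h) U_{gh}`. -/
structure IsTwistedGroupAlgebra (F : Type) [Field F] (G : Type) [Group G]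
    (A : Type) [Ring A] [Algebra F A] (U : G → Aˣ) (α : G → G → Fˣ) : Prop where
  mul_eq : ∀ g h : G, (U g : A) * (U h : A) = (α g h : F) • (U (g * h) : A)
  indep : LinearIndependent F fun g => (U g : A)
  span : Submodule.span F (Set.range fun g => (U g : A)) = ⊤

/-- `t : Fin k → G` is a system of left coset representatives of the centralizer
`C_G(g)` in `G`. -/
def IsLeftTransversalOfCentralizer {G : Type} [Group G] (g : G) {k : ℕ}
    (t : Fin k → G) : Prop :=
  ∀ x : G, ∃! i : Fin k, (t i)⁻¹ * x ∈ Subgroup.centralizer {g}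

section Aux

variable {F : Type} [Field F] {G : Type} [Group G] {A : Type} [Ring A] [Algebra F A]
  {U : G → Aˣ} {α : G → G → Fˣ}

/-- `U h * (U x)⁻¹` is a nonzero scalar multiple of `U (h * x⁻¹)`. -/
lemma TGA.mul_inv_U (hA : IsTwistedGroupAlgebra F G A U α) (h x : G) :
    (U h : A) * ↑(U x)⁻¹ = ((α (h * x⁻¹) x : F))⁻¹ • (U (h * x⁻¹) : A) := by
  have h1 : (U (h * x⁻¹) : A) * U x = (α (h * x⁻¹) x : F) • (U (h * x⁻¹ * x) : A) :=
    hA.mul_eq _ _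
  have hx : h * x⁻¹ * x = h := by group
  rw [hx] at h1
  have h2 : (U h : A) = ((α (h * x⁻¹) x : F))⁻¹ • ((U (h * x⁻¹) : A) * U x) := by
    rw [h1, smul_smul, inv_mul_cancel₀ (Units.ne_zero _), one_smul]
  rw [h2, smul_mul_assoc, mul_assoc, Units.mul_inv, mul_one]

/-- Inverse of a product of basis units. -/
lemma TGA.inv_U_mul (hA : IsTwistedGroupAlgebra F G A U α) (g c : G) :
    (↑(U (g * c))⁻¹ : A) = (α g c : F) • ((↑(U c)⁻¹ : A) * ↑(U g)⁻¹) := by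
  apply Units.inv_eq_of_mul_eq_one_right
  have hUgc : (U (g * c) : A) = (α g c : F)⁻¹ • ((U g : A) * U c) := by
    rw [hA.mul_eq, smul_smul, inv_mul_cancel₀ (Units.ne_zero _), one_smul]
  rw [hUgc, smul_mul_assoc, mul_smul_comm, smul_smul,
    inv_mul_cancel₀ (Units.ne_zero _), one_smul]
  calc (U g : A) * U c * (↑(U c)⁻¹ * ↑(U g)⁻¹)
      = (U g : A) * ((U c : A) * ↑(U c)⁻¹) * ↑(U g)⁻¹ := by
        simp only [mul_assoc]
    _ = 1 := by rw [Units.mul_inv, mul_one, Units.mul_inv]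

/-- Key lemma: if some unit `U c` with `c` centralizing `k` fails to commute with `U k`,
then the full "conjugation sum" of `U k` vanishes. -/
lemma TGA.conj_sum_eq_zero [Fintype G] (hA : IsTwistedGroupAlgebra F G A U α) (k : G)
    (c : G) (hc : c ∈ Subgroup.centralizer {k})
    (hne : (U k : A) * U c ≠ (U c : A) * U k) :
    ∑ g : G, (U g : A) * U k * ↑(U g)⁻¹ = 0 := by
  set χ : F := (α c k : F) * (α k c : F)⁻¹ with hχ
  have hck : k * c = c * k := Subgroup.mem_centralizer_iff.1 hc k rfl
  have claim1 : (U c : A) * U k = χ • ((U k : A) * U c) := by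
    rw [hA.mul_eq c k, hA.mul_eq k c, hck, smul_smul]
    congr 1
    rw [hχ, mul_assoc, inv_mul_cancel₀ (Units.ne_zero _), mul_one]
  have hχ1 : χ ≠ 1 := by
    intro h1
    have h2 := claim1
    rw [h1, one_smul] at h2
    exact hne h2.symm
  have hconj : (U c : A) * U k * ↑(U c)⁻¹ = χ • (U k : A) := by
    rw [claim1, smul_mul_assoc, mul_assoc, Units.mul_inv, mul_one]
  have claim3 : ∀ g : G, (U (g * c) : A) * U k * ↑(U (g * c))⁻¹
      = χ • ((U g : A) * U k * ↑(U g)⁻¹) := by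
    intro g
    have hUgc : (U (g * c) : A) = (α g c : F)⁻¹ • ((U g : A) * U c) := by
      rw [hA.mul_eq, smul_smul, inv_mul_cancel₀ (Units.ne_zero _), one_smul]
    calc (U (g * c) : A) * U k * ↑(U (g * c))⁻¹
        = ((α g c : F)⁻¹ • ((U g : A) * U c)) * U k *
            ((α g c : F) • ((↑(U c)⁻¹ : A) * ↑(U g)⁻¹)) := by
          rw [← hUgc, ← TGA.inv_U_mul hA g c]
      _ = ((α g c : F)⁻¹ * (α g c : F)) •
            ((U g : A) * U c * U k * ((↑(U c)⁻¹ : A) * ↑(U g)⁻¹)) := by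
          rw [smul_mul_assoc, smul_mul_assoc, mul_smul_comm, smul_smul]
      _ = (U g : A) * U c * U k * ((↑(U c)⁻¹ : A) * ↑(U g)⁻¹) := by
          rw [inv_mul_cancel₀ (Units.ne_zero _), one_smul]
      _ = (U g : A) * ((U c : A) * U k * ↑(U c)⁻¹) * ↑(U g)⁻¹ := by
          simp only [mul_assoc]
      _ = (U g : A) * (χ • (U k : A)) * ↑(U g)⁻¹ := by rw [hconj]
      _ = χ • ((U g : A) * U k * ↑(U g)⁻¹) := by
          rw [mul_smul_comm, smul_mul_assoc]
  have hsum : (∑ g : G, (U g : A) * U k * ↑(U g)⁻¹)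
      = χ • ∑ g : G, (U g : A) * U k * ↑(U g)⁻¹ := by
    rw [Finset.smul_sum]
    calc ∑ g : G, (U g : A) * U k * ↑(U g)⁻¹
        = ∑ g : G, (U (g * c) : A) * U k * ↑(U (g * c))⁻¹ :=
          (Fintype.sum_equiv (Equiv.mulRight c)
            (fun g => (U (g * c) : A) * U k * ↑(U (g * c))⁻¹)
            (fun g => (U g : A) * U k * ↑(U g)⁻¹) (fun g => rfl)).symm
      _ = ∑ g : G, χ • ((U g : A) * U k * ↑(U g)⁻¹) := by
          exact Finset.sum_congr rfl fun g _ => claim3 g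
  have hzero : (1 - χ) • (∑ g : G, (U g : A) * U k * ↑(U g)⁻¹) = 0 := by
    rw [sub_smul, one_smul, ← hsum, sub_self]
  rcases smul_eq_zero.mp hzero with h | h
  · exact absurd (sub_eq_zero.mp h).symm hχ1
  · exact h

end Aux

/-- let `H ≤ G` of index 2 and `F^α G` a twisted group algebra over an
algebraically closed field of characteristic zero such that for every `e ≠ h ∈ H` there
is `g ∈ C_G(h)` with `U_h U_g ≠ U_g U_h`.  Then `F^α G`, with the `ℤ/2ℤ`-grading whose
even part is spanned by `{U_h : h ∈ H}` and odd part by `{U_g : g ∉ H}`, has no nonzero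
proper graded two-sided ideal. -/
theorem twisted_group_algebra_graded_simple (F : Type) [Field F] [IsAlgClosed F]
    [CharZero F] (G : Type) [Group G] [Fintype G]
    (A : Type) [Ring A] [Algebra F A] (U : G → Aˣ) (α : G → G → Fˣ)
    (hA : IsTwistedGroupAlgebra F G A U α)
    (H : Subgroup G) (hH : H.index = 2)
    (hnd : ∀ h : G, h ∈ H → h ≠ 1 → ∃ g ∈ Subgroup.centralizer {h},
      (U h : A) * (U g : A) ≠ (U g : A) * (U h : A)) :
    ∀ I : TwoSidedIdeal A,
      (∀ a ∈ I, ∃ a₀ a₁ : A,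
        a₀ ∈ Submodule.span F ((fun g => (U g : A)) '' (H : Set G)) ∧
        a₁ ∈ Submodule.span F ((fun g => (U g : A)) '' ((H : Set G)ᶜ)) ∧
        a₀ ∈ I ∧ a₁ ∈ I ∧ a = a₀ + a₁) →
      I = ⊥ ∨ I = ⊤ := by
  intro I hgr
  by_cases hbot : I = ⊥
  · exact Or.inl hbot
  right
  -- the basis given by the units U g
  have hspan : ⊤ ≤ Submodule.span F (Set.range fun g => (U g : A)) := hA.span.ge
  set B : Module.Basis G F A := Module.Basis.mk hA.indep hspan with hBdef
  have hB : ∀ g : G, B g = (U g : A) := fun g => Module.Basis.mk_apply _ _ _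
  -- U 1 is a scalar
  have hU1 : (U 1 : A) = (α 1 1 : F) • 1 := by
    have h1 : (U 1 : A) * U 1 = (α 1 1 : F) • (U (1 * 1) : A) := hA.mul_eq 1 1
    rw [one_mul] at h1
    calc (U 1 : A) = ((U 1 : A) * U 1) * ↑(U 1)⁻¹ := by
          rw [mul_assoc, Units.mul_inv, mul_one]
      _ = (α 1 1 : F) • ((U 1 : A) * ↑(U 1)⁻¹) := by rw [h1, smul_mul_assoc]
      _ = (α 1 1 : F) • 1 := by rw [Units.mul_inv]
  -- the conjugation sum of U 1
  have hT1 : ∑ h : G, (U h : A) * (U 1 : A) * ↑(U h)⁻¹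
      = ((Fintype.card G : F) * (α 1 1 : F)) • 1 := by
    have hterm : ∀ h : G, (U h : A) * (U 1 : A) * ↑(U h)⁻¹ = (α 1 1 : F) • 1 := by
      intro h
      rw [hU1, mul_smul_comm, mul_one, smul_mul_assoc, Units.mul_inv]
    rw [Finset.sum_congr rfl fun h _ => hterm h, Finset.sum_const, Finset.card_univ,
      ← Nat.cast_smul_eq_nsmul F, smul_smul]
  -- the conjugation sum of U k vanishes for 1 ≠ k ∈ H
  have key : ∀ k : G, k ∈ H → k ≠ 1 → ∑ g : G, (U g : A) * U k * ↑(U g)⁻¹ = 0 := by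
    intro k hk hk1
    obtain ⟨c, hc, hne⟩ := hnd k hk hk1
    exact TGA.conj_sum_eq_zero hA k c hc hne
  -- the main step: a nonzero element of I supported in a coset of H forces I = ⊤
  have main : ∀ b : A, b ∈ I → b ≠ 0 → ∀ S : Set G,
      (∀ x ∈ S, ∀ y ∈ S, x * y⁻¹ ∈ H) →
      b ∈ Submodule.span F ((fun g => (U g : A)) '' S) → (1 : A) ∈ I := by
    intro b hbI hb0 S hS hbS
    have hBfun : ⇑B = fun g => (U g : A) := funext hB
    have hsupp : ((B.repr b).support : Set G) ⊆ S := by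
      rw [← Module.Basis.mem_span_image, hBfun]; exact hbS
    have hb0' : B.repr b ≠ 0 := fun h => hb0 (B.repr.map_eq_zero_iff.mp h)
    obtain ⟨x₀, hx₀⟩ := Finsupp.support_nonempty_iff.mpr hb0'
    have hx₀S : x₀ ∈ S := hsupp hx₀
    have hcx₀ : B.repr b x₀ ≠ 0 := Finsupp.mem_support_iff.mp hx₀
    set b' : A := b * ↑(U x₀)⁻¹ with hb'def
    have hb'I : b' ∈ I := I.mul_mem_right _ _ hbI
    have hbeq : b = ∑ g : G, B.repr b g • (U g : A) := by
      conv_lhs => rw [← B.sum_repr b]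
      exact Finset.sum_congr rfl fun g _ => by rw [hB g]
    have hb'eq : b' = ∑ g : G,
        (B.repr b g * ((α (g * x₀⁻¹) x₀ : F))⁻¹) • (U (g * x₀⁻¹) : A) := by
      rw [hb'def]
      conv_lhs => rw [hbeq]
      rw [Finset.sum_mul]
      refine Finset.sum_congr rfl fun g _ => ?_
      rw [smul_mul_assoc, TGA.mul_inv_U hA g x₀, smul_smul]
    -- the conjugation sum of b'
    set s : F := (B.repr b x₀ * ((α 1 x₀ : F))⁻¹) *
      ((Fintype.card G : F) * (α 1 1 : F)) with hsdef
    have hTb' : ∑ h : G, (U h : A) * b' * ↑(U h)⁻¹ = s • 1 := by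
      calc ∑ h : G, (U h : A) * b' * ↑(U h)⁻¹
          = ∑ h : G, ∑ g : G, (B.repr b g * ((α (g * x₀⁻¹) x₀ : F))⁻¹) •
              ((U h : A) * (U (g * x₀⁻¹) : A) * ↑(U h)⁻¹) := by
            refine Finset.sum_congr rfl fun h _ => ?_
            rw [hb'eq, Finset.mul_sum, Finset.sum_mul]
            refine Finset.sum_congr rfl fun g _ => ?_
            rw [mul_smul_comm, smul_mul_assoc]
        _ = ∑ g : G, (B.repr b g * ((α (g * x₀⁻¹) x₀ : F))⁻¹) •
              ∑ h : G, (U h : A) * (U (g * x₀⁻¹) : A) * ↑(U h)⁻¹ := by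
            rw [Finset.sum_comm]
            exact Finset.sum_congr rfl fun g _ => (Finset.smul_sum).symm
        _ = (B.repr b x₀ * ((α (x₀ * x₀⁻¹) x₀ : F))⁻¹) •
              ∑ h : G, (U h : A) * (U (x₀ * x₀⁻¹) : A) * ↑(U h)⁻¹ := by
            refine Finset.sum_eq_single_of_mem x₀ (Finset.mem_univ _) fun g _ hg => ?_
            by_cases hzero : B.repr b g = 0
            · rw [hzero, zero_mul, zero_smul]
            · have hgS : g ∈ S := hsupp (Finsupp.mem_support_iff.mpr hzero)
              have hmem : g * x₀⁻¹ ∈ H := hS g hgS x₀ hx₀S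
              have hne1 : g * x₀⁻¹ ≠ 1 := fun hcon => hg (mul_inv_eq_one.mp hcon)
              rw [key _ hmem hne1, smul_zero]
        _ = s • 1 := by
            rw [mul_inv_cancel, hT1, smul_smul, hsdef]
    have hs : s ≠ 0 := by
      refine mul_ne_zero (mul_ne_zero hcx₀ (inv_ne_zero (Units.ne_zero _)))
        (mul_ne_zero ?_ (Units.ne_zero _))
      exact_mod_cast Nat.cast_ne_zero.mpr Fintype.card_ne_zero
    have hsI : s • (1 : A) ∈ I := by
      rw [← hTb']
      refine TwoSidedIdeal.finsetSum_mem I _ _ fun h _ => ?_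
      exact I.mul_mem_right _ _ (I.mul_mem_left _ _ hb'I)
    rw [Algebra.smul_def, mul_one] at hsI
    have h1 : algebraMap F A s⁻¹ * algebraMap F A s ∈ I := I.mul_mem_left _ _ hsI
    rwa [← map_mul, inv_mul_cancel₀ hs, map_one] at h1
  -- pick a nonzero element of I
  obtain ⟨a, haI, ha0⟩ : ∃ a ∈ I, a ≠ 0 := by
    by_contra hcon
    push_neg at hcon
    apply hbot
    refine SetLike.ext fun x => ?_
    rw [TwoSidedIdeal.mem_bot]
    exact ⟨fun h => hcon x h, fun h => h ▸ I.zero_mem⟩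
  obtain ⟨a₀, a₁, hsp0, hsp1, hI0, hI1, heq⟩ := hgr a haI
  have hS₀ : ∀ x ∈ (H : Set G), ∀ y ∈ (H : Set G), x * y⁻¹ ∈ H :=
    fun x hx y hy => H.mul_mem hx (H.inv_mem hy)
  have hS₁ : ∀ x ∈ (H : Set G)ᶜ, ∀ y ∈ (H : Set G)ᶜ, x * y⁻¹ ∈ H := by
    intro x hx y hy
    rw [Subgroup.mul_mem_iff_of_index_two hH]
    simp only [Set.mem_compl_iff, SetLike.mem_coe] at hx hy
    exact iff_of_false hx fun h => hy ((Subgroup.inv_mem_iff H).mp h)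
  apply TwoSidedIdeal.eq_top
  by_cases h0 : a₀ = 0
  · have h1 : a₁ ≠ 0 := fun h => ha0 (by rw [heq, h0, h, add_zero])
    exact main a₁ hI1 h1 _ hS₁ hsp1
  · exact main a₀ hI0 h0 _ hS₀ hsp0
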